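/- Let (M,g,H) be a Riemannian manifold with H a 3-form that is closed (dH = 0) and covariantly constant with respect to the metric connection ∇̂ with torsion H (∇̂H = 0). Then H is covariantly constant with respect to the Levi-Civita connection: ∇H = 0. -/

import Mathlib

open scoped BigOperators
open Matrix

noncomputable section

variable {n : ℕ}

/-- Coordinate partial derivative of a function on `ℝⁿ` in the `i`-th coordinate direction. -/
def pd (i : Fin n) (f : EuclideanSpace ℝ (Fin n) → ℝ) (x : EuclideanSpace ℝ (Fin n)) : ℝ :=
  fderiv ℝ f x (EuclideanSpace.single i 1)

/-- Lowered Christoffel symbols `Γ_{kij}` of the Levi-Civita connection of the metric `g`. -/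
def christoffelLow (g : EuclideanSpace ℝ (Fin n) → Fin n → Fin n → ℝ) (k i j : Fin n)
    (x : EuclideanSpace ℝ (Fin n)) : ℝ :=
  (1 / 2) * (pd i (fun y => g y j k) x + pd j (fun y => g y i k) x - pd k (fun y => g y i j) x)

/-- Christoffel symbols `Γ^k_{ij}` of the Levi-Civita connection `∇` of `g`. -/
def christoffel (g ginv : EuclideanSpace ℝ (Fin n) → Fin n → Fin n → ℝ) (k i j : Fin n)
    (x : EuclideanSpace ℝ (Fin n)) : ℝ :=
  ∑ l, ginv x k l * christoffelLow g l i j x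

/-- Connection coefficients `Γ̂^k_{ij} = Γ^k_{ij} + ½ H^k_{ij}` of the metric connection `∇̂`
with torsion the totally skew 3-form `H` (indices raised with `g`). -/
def christoffelHat (g ginv : EuclideanSpace ℝ (Fin n) → Fin n → Fin n → ℝ)
    (H : EuclideanSpace ℝ (Fin n) → Fin n → Fin n → Fin n → ℝ) (k i j : Fin n)
    (x : EuclideanSpace ℝ (Fin n)) : ℝ :=
  christoffel g ginv k i j x + (1 / 2) * ∑ l, ginv x k l * H x l i j

/-- Curvature `R̂_{ij}{}^k{}_m` of `∇̂`, with the convention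
`(∇̂_i∇̂_j - ∇̂_j∇̂_i) X^k = R̂_{ij}{}^k{}_m X^m` (modulo the torsion term). -/
def curvHatUp (g ginv : EuclideanSpace ℝ (Fin n) → Fin n → Fin n → ℝ)
    (H : EuclideanSpace ℝ (Fin n) → Fin n → Fin n → Fin n → ℝ) (i j k m : Fin n)
    (x : EuclideanSpace ℝ (Fin n)) : ℝ :=
  pd i (christoffelHat g ginv H k j m) x - pd j (christoffelHat g ginv H k i m) x
    + ∑ p, (christoffelHat g ginv H k i p x * christoffelHat g ginv H p j m x
        - christoffelHat g ginv H k j p x * christoffelHat g ginv H p i m x)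

/-- Fully lowered curvature tensor `R̂_{ijkm} = g_{kp} R̂_{ij}{}^p{}_m` of `∇̂`. -/
def curvHat (g ginv : EuclideanSpace ℝ (Fin n) → Fin n → Fin n → ℝ)
    (H : EuclideanSpace ℝ (Fin n) → Fin n → Fin n → Fin n → ℝ) (i j k m : Fin n)
    (x : EuclideanSpace ℝ (Fin n)) : ℝ :=
  ∑ p, g x k p * curvHatUp g ginv H i j p m x

/-- Covariant derivative `∇̂_i H_{jkm}` of the 3-form `H` with respect to `∇̂`. -/
def nablaHatH (g ginv : EuclideanSpace ℝ (Fin n) → Fin n → Fin n → ℝ)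
    (H : EuclideanSpace ℝ (Fin n) → Fin n → Fin n → Fin n → ℝ) (i j k m : Fin n)
    (x : EuclideanSpace ℝ (Fin n)) : ℝ :=
  pd i (fun y => H y j k m) x
    - ∑ p, (christoffelHat g ginv H p i j x * H x p k m
        + christoffelHat g ginv H p i k x * H x j p m
        + christoffelHat g ginv H p i m x * H x j k p)

/-- Covariant derivative `∇_i H_{jkm}` of the 3-form `H` with respect to the
Levi-Civita connection `∇` of `g`. -/
def nablaLCH (g ginv : EuclideanSpace ℝ (Fin n) → Fin n → Fin n → ℝ)
    (H : EuclideanSpace ℝ (Fin n) → Fin n → Fin n → Fin n → ℝ) (i j k m : Fin n)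
    (x : EuclideanSpace ℝ (Fin n)) : ℝ :=
  pd i (fun y => H y j k m) x
    - ∑ p, (christoffel g ginv p i j x * H x p k m
        + christoffel g ginv p i k x * H x j p m
        + christoffel g ginv p i m x * H x j k p)

/-- Components `(dH)_{ijkm}` of the exterior derivative of the 3-form `H`. -/
def extDerH (H : EuclideanSpace ℝ (Fin n) → Fin n → Fin n → Fin n → ℝ) (i j k m : Fin n)
    (x : EuclideanSpace ℝ (Fin n)) : ℝ :=
  pd i (fun y => H y j k m) x - pd j (fun y => H y i k m) x
    + pd k (fun y => H y i j m) x - pd m (fun y => H y i j k) x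

/-- `g` is a smooth Riemannian metric (in the fixed global chart) with inverse `ginv`. -/
def IsRiemannianData (g ginv : EuclideanSpace ℝ (Fin n) → Fin n → Fin n → ℝ) : Prop :=
  (∀ x i j, g x i j = g x j i) ∧
  (∀ (x : EuclideanSpace ℝ (Fin n)) (v : Fin n → ℝ), v ≠ 0 →
    0 < ∑ i, ∑ j, g x i j * v i * v j) ∧
  (∀ x i j, (∑ k, g x i k * ginv x k j) = if i = j then (1 : ℝ) else 0) ∧
  (∀ i j, ContDiff ℝ (⊤ : ℕ∞) fun x => g x i j) ∧
  (∀ i j, ContDiff ℝ (⊤ : ℕ∞) fun x => ginv x i j)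

/-- `H` is a smooth (totally antisymmetric) 3-form. -/
def IsThreeForm (H : EuclideanSpace ℝ (Fin n) → Fin n → Fin n → Fin n → ℝ) : Prop :=
  (∀ x i j k, H x i j k = -H x j i k) ∧
  (∀ x i j k, H x i j k = -H x i k j) ∧
  (∀ i j k, ContDiff ℝ (⊤ : ℕ∞) fun x => H x i j k)



lemma ginv_symm_aux (g ginv : EuclideanSpace ℝ (Fin n) → Fin n → Fin n → ℝ)
    (hgsym : ∀ x i j, g x i j = g x j i)
    (hginv : ∀ x i j, (∑ k, g x i k * ginv x k j) = if i = j then (1:ℝ) else 0)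
    (x : EuclideanSpace ℝ (Fin n)) (a b : Fin n) : ginv x a b = ginv x b a := by
  classical
  set A : Matrix (Fin n) (Fin n) ℝ := Matrix.of (g x) with hA
  set B : Matrix (Fin n) (Fin n) ℝ := Matrix.of (ginv x) with hB
  have hAB : A * B = 1 := by
    ext i j
    simp only [Matrix.mul_apply, hA, hB, Matrix.of_apply, Matrix.one_apply]
    exact hginv x i j
  have hAT : Aᵀ = A := by
    ext i j; simp only [Matrix.transpose_apply, hA, Matrix.of_apply]; exact hgsym x j i
  have hBT : Bᵀ = B := by
    have h1 : Bᵀ * A = 1 := by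
      calc Bᵀ * A = Bᵀ * Aᵀ := by rw [hAT]
        _ = (A * B)ᵀ := by rw [Matrix.transpose_mul]
        _ = 1 := by rw [hAB, Matrix.transpose_one]
    calc Bᵀ = Bᵀ * (A * B) := by rw [hAB, Matrix.mul_one]
      _ = (Bᵀ * A) * B := by rw [Matrix.mul_assoc]
      _ = B := by rw [h1, Matrix.one_mul]
  have := congrFun (congrFun hBT b) a
  simpa only [Matrix.transpose_apply, hB, Matrix.of_apply] using this



lemma sum3 (f g h : Fin n → ℝ) : ∑ l, (f l + g l + h l) = ∑ l, f l + ∑ l, g l + ∑ l, h l := by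
  simp [Finset.sum_add_distrib]

lemma sum_antisym_zero (gi : Fin n → Fin n → ℝ) (F : Fin n → Fin n → ℝ)
    (hgi : ∀ a b, gi a b = gi b a) (hF : ∀ a b, F a b = -F b a) :
    ∑ p, ∑ l, gi p l * F p l = 0 := by
  have h : (∑ p, ∑ l, gi p l * F p l) = -∑ p, ∑ l, gi p l * F p l := by
    calc (∑ p, ∑ l, gi p l * F p l) = ∑ l, ∑ p, gi p l * F p l := Finset.sum_comm
      _ = ∑ l, ∑ p, -(gi l p * F l p) := by
          refine Finset.sum_congr rfl fun l _ => Finset.sum_congr rfl fun p _ => ?_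
          rw [hgi p l, hF p l]; ring
      _ = -∑ p, ∑ l, gi p l * F p l := by simp
  linarith

lemma key_alg (gi : Fin n → Fin n → ℝ) (Hx : Fin n → Fin n → Fin n → ℝ)
    (c : Fin n → Fin n → Fin n → ℝ) (D : Fin n → Fin n → Fin n → Fin n → ℝ)
    (hgi : ∀ a b, gi a b = gi b a)
    (ha : ∀ a b d, Hx a b d = -Hx b a d)
    (hb : ∀ a b d, Hx a b d = -Hx a d b)
    (csym : ∀ p a b, c p a b = c p b a)
    (hpar : ∀ i j k m, D i j k m =
      ∑ p, ((c p i j + (1/2) * ∑ l, gi p l * Hx l i j) * Hx p k m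
        + (c p i k + (1/2) * ∑ l, gi p l * Hx l i k) * Hx j p m
        + (c p i m + (1/2) * ∑ l, gi p l * Hx l i m) * Hx j k p))
    (hclosed : ∀ i j k m, D i j k m - D j i k m + D k i j m - D m i j k = 0)
    (i j k m : Fin n) :
    D i j k m = ∑ p, (c p i j * Hx p k m + c p i k * Hx j p m + c p i m * Hx j k p) := by
  have hcyc : ∀ a b d, Hx a b d = Hx b d a := by
    intro a b d; rw [ha a b d, hb b a d, neg_neg]
  have hcyc2 : ∀ a b d, Hx a b d = Hx d a b := by
    intro a b d; rw [hcyc a b d, hcyc b d a]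
  set Q : Fin n → Fin n → Fin n → Fin n → ℝ := fun a b d e =>
    ∑ p, ∑ l, gi p l * (Hx l a b * Hx p d e + Hx l a d * Hx b p e + Hx l a e * Hx b d p)
    with hQdef
  set C : Fin n → Fin n → Fin n → Fin n → ℝ := fun a b d e =>
    ∑ p, (c p a b * Hx p d e + c p a d * Hx b p e + c p a e * Hx b d p) with hCdef
  -- Step 1 : D = C + Q/2
  have hD : ∀ a b d e, D a b d e = C a b d e + (1/2) * Q a b d e := by
    intro a b d e
    rw [hpar a b d e, hQdef, hCdef]
    simp only []
    rw [Finset.mul_sum, ← Finset.sum_add_distrib]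
    refine Finset.sum_congr rfl fun p _ => ?_
    have h1 : (∑ l, gi p l * Hx l a b) * Hx p d e = ∑ l, gi p l * (Hx l a b * Hx p d e) := by
      rw [Finset.sum_mul]; exact Finset.sum_congr rfl fun l _ => by ring
    have h2 : (∑ l, gi p l * Hx l a d) * Hx b p e = ∑ l, gi p l * (Hx l a d * Hx b p e) := by
      rw [Finset.sum_mul]; exact Finset.sum_congr rfl fun l _ => by ring
    have h3 : (∑ l, gi p l * Hx l a e) * Hx b d p = ∑ l, gi p l * (Hx l a e * Hx b d p) := by
      rw [Finset.sum_mul]; exact Finset.sum_congr rfl fun l _ => by ring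
    have h4 : ∑ l, gi p l * (Hx l a b * Hx p d e + Hx l a d * Hx b p e + Hx l a e * Hx b d p)
        = (∑ l, gi p l * (Hx l a b * Hx p d e)) + (∑ l, gi p l * (Hx l a d * Hx b p e))
          + (∑ l, gi p l * (Hx l a e * Hx b d p)) := by
      rw [← sum3]; exact Finset.sum_congr rfl fun l _ => by ring
    rw [h4, ← h1, ← h2, ← h3]; ring
  -- Step 2 : alternation of C vanishes
  have hC : ∀ a b d e, C a b d e - C b a d e + C d a b e - C e a b d = 0 := by
    intro a b d e
    rw [hCdef]
    simp only []
    rw [← Finset.sum_sub_distrib, ← Finset.sum_add_distrib, ← Finset.sum_sub_distrib]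
    refine Finset.sum_eq_zero fun p _ => ?_
    rw [csym p b a, csym p d a, csym p d b, csym p e a, csym p e b, csym p e d,
      ha p b e, hcyc p b d, hb a p d]
    ring
  -- Step 3 : alternation of Q vanishes
  have hAlt : Q i j k m - Q j i k m + Q k i j m - Q m i j k = 0 := by
    have h := hclosed i j k m
    rw [hD i j k m, hD j i k m, hD k i j m, hD m i j k] at h
    have hc := hC i j k m
    linarith
  -- Step 4 : symmetries of Q
  have hQ1 : ∀ a b d e, Q a b d e + Q a d b e = 0 := by
    intro a b d e
    rw [hQdef]; simp only []
    rw [← Finset.sum_add_distrib]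
    refine Finset.sum_eq_zero fun p _ => ?_
    rw [← Finset.sum_add_distrib]
    refine Finset.sum_eq_zero fun l _ => ?_
    rw [ha p b e, ha d p e, ha d b p]
    ring
  have hQ2 : ∀ a b d e, Q a b d e + Q a b e d = 0 := by
    intro a b d e
    rw [hQdef]; simp only []
    rw [← Finset.sum_add_distrib]
    refine Finset.sum_eq_zero fun p _ => ?_
    rw [← Finset.sum_add_distrib]
    refine Finset.sum_eq_zero fun l _ => ?_
    rw [hb p e d, hb b p d, hb b e p]
    ring
  have hQ3 : ∀ a b d e, Q a b d e + Q b a d e = 0 := by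
    intro a b d e
    have key : Q a b d e + Q b a d e = ∑ p, ∑ l, gi p l *
        (Hx l a d * Hx b p e + Hx l a e * Hx b d p + Hx l b d * Hx a p e + Hx l b e * Hx a d p) := by
      rw [hQdef]; simp only []
      rw [← Finset.sum_add_distrib]
      refine Finset.sum_congr rfl fun p _ => ?_
      rw [← Finset.sum_add_distrib]
      refine Finset.sum_congr rfl fun l _ => ?_
      rw [hb l b a]
      ring
    rw [key]
    refine sum_antisym_zero gi _ hgi ?_
    intro p l
    rw [hcyc p a d, ha b l e, ha p a e, hcyc2 b d l, hcyc p b d, ha a l e,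
      ha p b e, hcyc2 a d l]
    ring
  -- Step 5 : Q = 0
  have hQ0 : Q i j k m = 0 := by
    have e1 : Q j i k m = -Q i j k m := by linarith [hQ3 i j k m]
    have e2 : Q k i j m = Q i j k m := by linarith [hQ3 i k j m, hQ1 i k j m]
    have e3 : Q m i j k = -Q i j k m := by linarith [hQ3 i m j k, hQ1 i m j k, hQ2 i j m k]
    linarith
  rw [hD i j k m, hQ0]
  simp [hCdef]

/-- If the 3-form `H` is closed and covariantly constant with respect to the
metric connection `∇̂` with torsion `H`, then `H` is covariantly constant with respect to the
Levi-Civita connection: `∇H = 0`. -/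
theorem lc_parallel_of_hat_parallel
    (g ginv : EuclideanSpace ℝ (Fin n) → Fin n → Fin n → ℝ)
    (H : EuclideanSpace ℝ (Fin n) → Fin n → Fin n → Fin n → ℝ)
    (hg : IsRiemannianData g ginv) (hH : IsThreeForm H)
    (hclosed : ∀ (x : EuclideanSpace ℝ (Fin n)) (i j k m : Fin n), extDerH H i j k m x = 0)
    (hpar : ∀ (x : EuclideanSpace ℝ (Fin n)) (i j k m : Fin n),
      nablaHatH g ginv H i j k m x = 0) :
    ∀ (x : EuclideanSpace ℝ (Fin n)) (i j k m : Fin n),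
      nablaLCH g ginv H i j k m x = 0 := by
  intro x i j k m
  obtain ⟨hgsym, _hpos, hginveq, _, _⟩ := hg
  obtain ⟨hHa, hHb, _⟩ := hH
  have hgisym : ∀ a b, ginv x a b = ginv x b a := ginv_symm_aux g ginv hgsym hginveq x
  have csym : ∀ p a b, christoffel g ginv p a b x = christoffel g ginv p b a x := by
    intro p a b
    unfold christoffel christoffelLow
    refine Finset.sum_congr rfl fun l _ => ?_
    have h1 : (fun y => g y a b) = fun y => g y b a := funext fun y => hgsym y a b
    rw [h1]; ring
  have hpar' : ∀ i j k m : Fin n, pd i (fun y => H y j k m) x =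
      ∑ p, ((christoffel g ginv p i j x + (1/2) * ∑ l, ginv x p l * H x l i j) * H x p k m
        + (christoffel g ginv p i k x + (1/2) * ∑ l, ginv x p l * H x l i k) * H x j p m
        + (christoffel g ginv p i m x + (1/2) * ∑ l, ginv x p l * H x l i m) * H x j k p) := by
    intro i j k m
    have h := hpar x i j k m
    unfold nablaHatH christoffelHat at h
    linarith [h]
  have hclosed' : ∀ i j k m : Fin n,
      pd i (fun y => H y j k m) x - pd j (fun y => H y i k m) x
        + pd k (fun y => H y i j m) x - pd m (fun y => H y i j k) x = 0 := by
    intro i j k m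
    have h := hclosed x i j k m
    unfold extDerH at h
    exact h
  have key := key_alg (ginv x) (H x) (fun p a b => christoffel g ginv p a b x)
      (fun a b d e => pd a (fun y => H y b d e) x) hgisym (fun a b d => hHa x a b d)
      (fun a b d => hHb x a b d) csym hpar' hclosed' i j k m
  unfold nablaLCH
  rw [sub_eq_zero]
  exact key
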